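/- There exists a constant C > 0 such that for all n ≥ 1, the mean number of ascending runs of a uniformly random function f : Fin n → Fin n satisfies | E_n − (1 − e^{−1})·n | ≤ C, where E_n = n^{−n} · Σ_{f : Fin n → Fin n} runs(f). In other words, E(R_n) = (1 − e^{−1})·n + O(1). -/

import Mathlib

/-- The number of ascending runs of `f`: the number of elements `j` that are the
start of an ascending run, i.e. every preimage `i` of `j` satisfies `j ≤ i`. -/
def numRuns {n : ℕ} (f : Fin n → Fin n) : ℕ :=
  (Finset.univ.filter (fun j : Fin n => ∀ i : Fin n, f i = j → j ≤ i)).card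

/-- The mean number of ascending runs of a uniformly random `n`-mapping. -/
noncomputable def meanRuns (n : ℕ) : ℝ :=
  (∑ f : Fin n → Fin n, (numRuns f : ℝ)) / (n : ℝ) ^ n

lemma sum_numRuns (n : ℕ) :
    ∑ f : Fin n → Fin n, numRuns f = ∑ j : Fin n, (n-1)^(j:ℕ) * n^(n - (j:ℕ)) := by
  unfold numRuns
  simp_rw [Finset.card_filter]
  rw [Finset.sum_comm]
  refine Finset.sum_congr rfl (fun j _ => ?_)
  rw [← Finset.card_filter]
  have hset : (Finset.univ.filter (fun f : Fin n → Fin n => ∀ i, f i = j → j ≤ i))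
      = Fintype.piFinset (fun i : Fin n => if i < j then Finset.univ.erase j else Finset.univ) := by
    ext f
    simp only [Finset.mem_filter, Finset.mem_univ, true_and, Fintype.mem_piFinset]
    constructor
    · intro h i
      split_ifs with hi
      · exact Finset.mem_erase.mpr ⟨fun hf => absurd (h i hf) (not_le.mpr hi), Finset.mem_univ _⟩
      · exact Finset.mem_univ _
    · intro h i hf
      by_contra hlt
      have := h i
      rw [if_pos (not_le.mp hlt)] at this
      exact (Finset.mem_erase.mp this).1 hf
  rw [hset, Fintype.card_piFinset]
  have hc : ∀ i : Fin n, ((if i < j then Finset.univ.erase j else Finset.univ) : Finset (Fin n)).card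
      = if i < j then n - 1 else n := by
    intro i
    split_ifs
    · rw [Finset.card_erase_of_mem (Finset.mem_univ _), Finset.card_univ, Fintype.card_fin]
    · rw [Finset.card_univ, Fintype.card_fin]
  simp_rw [hc]
  rw [Finset.prod_ite, Finset.prod_const, Finset.prod_const]
  have h1 : (Finset.univ.filter (fun i : Fin n => i < j)) = Finset.Iio j := by ext i; simp
  have h2 : (Finset.univ.filter (fun i : Fin n => ¬ i < j)).card = n - (j:ℕ) := by
    rw [Finset.filter_not, Finset.card_sdiff_of_subset (Finset.filter_subset _ _), h1, Fin.card_Iio,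
      Finset.card_univ, Fintype.card_fin]
  rw [h1, Fin.card_Iio, h2]

lemma meanRuns_eq (n : ℕ) (hn : 1 ≤ n) :
    meanRuns n = n * (1 - ((n - 1 : ℝ) / n) ^ n) := by
  have hn0 : (0:ℝ) < n := by exact_mod_cast hn
  have hne : (n:ℝ) ≠ 0 := ne_of_gt hn0
  set x : ℝ := (n - 1 : ℝ) / n with hx
  have hx1 : x ≠ 1 := by
    intro h
    rw [hx, div_eq_one_iff_eq hne] at h
    linarith
  have hsum : (∑ f : Fin n → Fin n, (numRuns f : ℝ))
      = ∑ j : Fin n, ((n:ℝ) - 1)^(j:ℕ) * (n:ℝ)^(n - (j:ℕ)) := by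
    rw [← Nat.cast_sum, sum_numRuns, Nat.cast_sum]
    refine Finset.sum_congr rfl (fun j _ => ?_)
    push_cast [Nat.cast_sub hn]
    ring
  rw [meanRuns, hsum]
  have hterm : ∀ j : Fin n, ((n:ℝ) - 1)^(j:ℕ) * (n:ℝ)^(n - (j:ℕ)) / (n:ℝ)^n = x^(j:ℕ) := by
    intro j
    have hj : (j:ℕ) ≤ n := le_of_lt j.isLt
    rw [hx, div_pow, div_eq_div_iff (pow_ne_zero _ hne) (pow_ne_zero _ hne),
      mul_assoc, ← pow_add, Nat.sub_add_cancel hj]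
  rw [Finset.sum_div]
  simp_rw [hterm]
  rw [Fin.sum_univ_eq_sum_range (fun i => x^i), geom_sum_eq hx1]
  have h1x : 1 - x = 1 / n := by
    rw [hx]; field_simp; ring
  rw [show ((x ^ n - 1) / (x - 1)) = (1 - x^n) / (1 - x) by rw [← neg_sub x 1, ← neg_sub (x^n) 1, neg_div_neg_eq]]
  rw [h1x, div_div_eq_mul_div, div_one, mul_comm]

lemma pow_le_exp_neg_one (n : ℕ) (hn : 1 ≤ n) :
    ((n - 1 : ℝ) / n) ^ n ≤ Real.exp (-1) := by
  have hn0 : (0:ℝ) < n := by exact_mod_cast hn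
  have hx0 : (0:ℝ) ≤ (n - 1 : ℝ) / n := by
    apply div_nonneg _ hn0.le
    have : (1:ℝ) ≤ n := by exact_mod_cast hn
    linarith
  have h1 : (n - 1 : ℝ) / n ≤ Real.exp (-(1/n)) := by
    have := Real.add_one_le_exp (-(1/n))
    have h2 : (n - 1 : ℝ) / n = -(1/n) + 1 := by field_simp; ring
    linarith
  calc ((n - 1 : ℝ) / n) ^ n ≤ (Real.exp (-(1/n))) ^ n := pow_le_pow_left₀ hx0 h1 n
    _ = Real.exp (-1) := by
        rw [← Real.exp_nat_mul]
        congr 1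
        field_simp
    
lemma exp_neg_one_le (n : ℕ) (hn : 1 ≤ n) :
    Real.exp (-1) * ((n - 1 : ℝ) / n) ≤ ((n - 1 : ℝ) / n) ^ n := by
  have hn0 : (0:ℝ) < n := by exact_mod_cast hn
  set x : ℝ := (n - 1 : ℝ) / n with hxdef
  have hx0 : (0:ℝ) ≤ x := by
    apply div_nonneg _ hn0.le
    have : (1:ℝ) ≤ n := by exact_mod_cast hn
    linarith
  have key : Real.exp (-1) ≤ x ^ (n - 1) := by
    rcases Nat.eq_or_lt_of_le hn with h1 | h2
    · simp [← h1, Real.exp_le_one_iff]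
    · -- n ≥ 2
      have hm : (0:ℝ) < (n:ℝ) - 1 := by
        have : (2:ℝ) ≤ n := by exact_mod_cast h2
        linarith
      have hle : Real.exp (-(1/((n:ℝ)-1))) ≤ x := by
        have hexp : 1/((n:ℝ)-1) + 1 ≤ Real.exp (1/((n:ℝ)-1)) := Real.add_one_le_exp _
        rw [Real.exp_neg, inv_le_iff_one_le_mul₀' (Real.exp_pos _)]
        calc (1:ℝ) = x * ((n:ℝ)/((n:ℝ)-1)) := by
              rw [hxdef]; field_simp
          _ ≤ x * Real.exp (1/((n:ℝ)-1)) := by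
              apply mul_le_mul_of_nonneg_left _ hx0
              rw [show (n:ℝ)/((n:ℝ)-1) = 1/((n:ℝ)-1) + 1 by field_simp; ring]
              exact hexp
          _ = Real.exp (1/((n:ℝ)-1)) * x := mul_comm _ _
      calc Real.exp (-1) = (Real.exp (-(1/((n:ℝ)-1)))) ^ (n-1) := by
            rw [← Real.exp_nat_mul]
            congr 1
            have : ((n-1 : ℕ) : ℝ) = (n:ℝ) - 1 := by
              push_cast [Nat.cast_sub hn]; ring
            rw [this]
            field_simp
        _ ≤ x ^ (n-1) := pow_le_pow_left₀ (Real.exp_pos _).le hle _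
  calc Real.exp (-1) * x ≤ x ^ (n-1) * x := mul_le_mul_of_nonneg_right key hx0
    _ = x ^ n := by
        rw [← pow_succ, Nat.sub_add_cancel hn]

/-- The expected number of ascending runs of a random `n`-mapping is
`(1 - e⁻¹)·n + O(1)`. -/
theorem meanRuns_asymptotic :
    ∃ C : ℝ, 0 < C ∧ ∀ n : ℕ, 1 ≤ n →
      |meanRuns n - (1 - Real.exp (-1)) * n| ≤ C := by
  refine ⟨1, one_pos, fun n hn => ?_⟩
  have hn0 : (0:ℝ) < n := by exact_mod_cast hn
  rw [meanRuns_eq n hn]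
  set x : ℝ := (n - 1 : ℝ) / n with hxdef
  have h1 : (n:ℝ) * (1 - x ^ n) - (1 - Real.exp (-1)) * n = n * (Real.exp (-1) - x ^ n) := by
    ring
  rw [h1, abs_of_nonneg]
  · have hub : Real.exp (-1) - x ^ n ≤ Real.exp (-1) * (1 - x) := by
      have := exp_neg_one_le n hn
      nlinarith [this]
    have h1x : 1 - x = 1 / n := by rw [hxdef]; field_simp; ring
    calc (n:ℝ) * (Real.exp (-1) - x ^ n) ≤ n * (Real.exp (-1) * (1 - x)) := by
          apply mul_le_mul_of_nonneg_left hub hn0.le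
      _ = Real.exp (-1) := by rw [h1x]; field_simp
      _ ≤ 1 := by rw [Real.exp_le_one_iff]; norm_num
  · apply mul_nonneg hn0.le
    have := pow_le_exp_neg_one n hn
    linarith
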